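/- Let f : P → Q and g : Q → R be monotone maps of finite posets. If f and g are pure filtration maps, then g ∘ f is a pure filtration map. If f and g ∘ f are pure filtration maps and f is surjective, then g is a pure filtration map. -/

import Mathlib

/-- `a` is a maximal element of the subposet `A`. -/
def IsMaxIn {P : Type*} [PartialOrder P] (A : Set P) (a : P) : Prop :=
  a ∈ A ∧ ∀ x ∈ A, a ≤ x → x = a

/-- `b` covers `a` within the subposet `A`: `a < b` and no element of `A` lies
strictly between them. -/
def CoversIn {P : Type*} [PartialOrder P] (A : Set P) (a b : P) : Prop :=
  a ∈ A ∧ b ∈ A ∧ a < b ∧ ∀ x ∈ A, a < x → ¬x < b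

/-- The subposet `A` is of codimension one in the subposet `B`: every maximal element
of `A` is covered (within `B`) by a maximal element of `B`. -/
def CodimOneIn {P : Type*} [PartialOrder P] (A B : Set P) : Prop :=
  ∀ a : P, IsMaxIn A a → ∃ b : P, IsMaxIn B b ∧ CoversIn B a b

/-- The subposet `A` is of pure codimension one in the subposet `B`: it is of
codimension one, and no maximal element of `A` is covered by a non-maximal element
of `B`. -/
def PureCodimOneIn {P : Type*} [PartialOrder P] (A B : Set P) : Prop :=
  CodimOneIn A B ∧ ∀ a : P, IsMaxIn A a → ∀ b : P, CoversIn B a b → IsMaxIn B b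

/-- `A` is a closed subposet of the subposet `B`. -/
def IsClosedSubposet {P : Type*} [PartialOrder P] (B A : Set P) : Prop :=
  A ⊆ B ∧ ∀ a ∈ A, ∀ x ∈ B, x ≤ a → x ∈ A

/-- A (sub)poset is constructible if either it has a greatest element, or it is a union
`Q ∪ R` of closed subposets such that `Q ∩ R` is of codimension one both in `Q` and in
`R`, and each of `Q`, `R` and `Q ∩ R` is constructible. -/
inductive PosetConstructible {P : Type*} [PartialOrder P] : Set P → Prop where
  | cone {A : Set P} {g : P} (hg : g ∈ A) (hgreatest : ∀ x ∈ A, x ≤ g) :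
      PosetConstructible A
  | step {Q R : Set P} (hQ : IsClosedSubposet (Q ∪ R) Q) (hR : IsClosedSubposet (Q ∪ R) R)
      (hcQ : CodimOneIn (Q ∩ R) Q) (hcR : CodimOneIn (Q ∩ R) R)
      (cQ : PosetConstructible Q) (cR : PosetConstructible R)
      (cQR : PosetConstructible (Q ∩ R)) : PosetConstructible (Q ∪ R)

/-- A monotone map `f : P → Q` is a filtration map if `f⁻¹(⌊q⌋ \ {q})` is of
codimension one in `f⁻¹(⌊q⌋)` for every `q`. -/
def IsFiltrationMap {P Q : Type*} [PartialOrder P] [PartialOrder Q] (f : P → Q) : Prop :=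
  ∀ q : Q, CodimOneIn (f ⁻¹' {y | y < q}) (f ⁻¹' {y | y ≤ q})

/-- A monotone map `f : P → Q` is a pure filtration map if `f⁻¹(⌊q⌋ \ {q})` is of
pure codimension one in `f⁻¹(⌊q⌋)` for every `q`. -/
def IsPureFiltrationMap {P Q : Type*} [PartialOrder P] [PartialOrder Q] (f : P → Q) :
    Prop :=
  ∀ q : Q, PureCodimOneIn (f ⁻¹' {y | y < q}) (f ⁻¹' {y | y ≤ q})

/-- A monotone map is constructible if it is a filtration map and every `f⁻¹(⌊q⌋)` is
constructible. -/
def IsConstructibleMap {P Q : Type*} [PartialOrder P] [PartialOrder Q] (f : P → Q) :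
    Prop :=
  IsFiltrationMap f ∧ ∀ q : Q, PosetConstructible (f ⁻¹' {y | y ≤ q})

section AuxLemmas

variable {P Q : Type*} [PartialOrder P] [PartialOrder Q]

/-- In a finite poset, above any element of a set there is a maximal element of the set. -/
lemma exists_maxIn_above [Finite P] {S : Set P} {a : P} (ha : a ∈ S) :
    ∃ m, a ≤ m ∧ IsMaxIn S m := by
  obtain ⟨m, hm, hmax⟩ := Set.Finite.exists_maximalFor id {x ∈ S | a ≤ x}
    (Set.toFinite _) ⟨a, ha, le_refl a⟩
  exact ⟨m, hm.2, hm.1, fun x hx hmx => le_antisymm (hmax ⟨hx, hm.2.trans hmx⟩ hmx) hmx⟩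

/-- In a finite poset, between `a < w` with `w ∈ T` (`T` closed) there is a minimal
element strictly above `a`, below `w`, lying in `T`, with nothing of `T` between. -/
lemma exists_cover_le [Finite P] {a w : P} {T : Set P}
    (hT : ∀ ⦃x y⦄, x ≤ y → y ∈ T → x ∈ T) (hw : w ∈ T) (haw : a < w) :
    ∃ c, a < c ∧ c ≤ w ∧ c ∈ T ∧ ∀ y ∈ T, a < y → ¬ y < c := by
  obtain ⟨c, hc, hmin⟩ := Set.Finite.exists_minimalFor id {y | a < y ∧ y ≤ w}
    (Set.toFinite _) ⟨w, haw, le_refl w⟩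
  refine ⟨c, hc.1, hc.2, hT hc.2 hw, fun y _ hay hyc => ?_⟩
  exact absurd (hmin ⟨hay, hyc.le.trans hc.2⟩ hyc.le) (not_le_of_gt hyc)

/-- If `a` is maximal in `f⁻¹{y < q}`, any `b > a` with `f b ≤ q` has `f b = q`. -/
lemma fval_eq {f : P → Q} {q : Q} {a b : P}
    (ha : IsMaxIn (f ⁻¹' {y | y < q}) a) (hab : a < b) (hb : f b ≤ q) : f b = q := by
  rcases lt_or_eq_of_le hb with h | h
  · exact absurd (ha.2 b h hab.le) hab.ne'
  · exact h

/-- Maximal elements of preimages of closed sets map to maximal elements,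
for filtration maps. -/
lemma maxIn_image [Finite P] {f : P → Q} (hf : Monotone f)
    (hfil : ∀ q : Q, CodimOneIn (f ⁻¹' {y | y < q}) (f ⁻¹' {y | y ≤ q}))
    {S : Set Q} (hS : ∀ ⦃x y⦄, x ≤ y → y ∈ S → x ∈ S) {a : P}
    (ha : IsMaxIn (f ⁻¹' S) a) : IsMaxIn S (f a) := by
  refine ⟨ha.1, fun z hz hle => ?_⟩
  by_contra hne
  have hlt : f a < z := hle.lt_of_ne (fun h => hne h.symm)
  obtain ⟨a', haa', ha'⟩ := exists_maxIn_above (S := f ⁻¹' {y | y < z}) hlt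
  obtain ⟨b, hbmax, hbcov⟩ := hfil z a' ha'
  have hfb : f b = z := fval_eq ha' hbcov.2.2.1 hbmax.1
  have hbS : b ∈ f ⁻¹' S := by rw [Set.mem_preimage, hfb]; exact hz
  have hba : b = a := ha.2 b hbS (haa'.trans hbcov.2.2.1.le)
  rw [hba] at hfb
  exact hne hfb.symm

end AuxLemmas

/-- Pure filtration maps compose; and if `f` and `g ∘ f` are pure filtration maps with
`f` surjective, then `g` is a pure filtration map. -/
theorem pure_filtration_composition {P Q R : Type*}
    [PartialOrder P] [PartialOrder Q] [PartialOrder R] [Finite P] [Finite Q] [Finite R]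
    (f : P → Q) (g : Q → R) (hf : Monotone f) (hg : Monotone g) :
    (IsPureFiltrationMap f → IsPureFiltrationMap g → IsPureFiltrationMap (g ∘ f)) ∧
    (IsPureFiltrationMap f → IsPureFiltrationMap (g ∘ f) → Function.Surjective f →
      IsPureFiltrationMap g) := by
  constructor
  · -- composition
    intro hf' hg' r
    have key : ∀ a : P, IsMaxIn ((g ∘ f) ⁻¹' {y | y < r}) a →
        IsMaxIn (g ⁻¹' {y | y < r}) (f a) := fun a ha =>
      maxIn_image hf (fun q => (hf' q).1)
        (fun x y hxy hy => lt_of_le_of_lt (hg hxy) hy) ha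
    constructor
    · -- codimension one
      intro a ha
      have hq : IsMaxIn (g ⁻¹' {y | y < r}) (f a) := key a ha
      obtain ⟨qs, hqsmax, hqscov⟩ := (hg' r).1 (f a) hq
      have hgqs : g qs = r := by
        rcases lt_or_eq_of_le (hqsmax.1 : g qs ≤ r) with h | h
        · exact absurd (hq.2 qs h hqscov.2.2.1.le) hqscov.2.2.1.ne'
        · exact h
      have haA : IsMaxIn (f ⁻¹' {y | y < qs}) a := by
        refine ⟨hqscov.2.2.1, fun p hp hap => ?_⟩
        by_contra hne
        have hap' : a < p := hap.lt_of_ne (fun h => hne h.symm)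
        have h1 : g (f p) ≤ r := hgqs ▸ hg (le_of_lt hp)
        rcases lt_or_eq_of_le h1 with h2 | h2
        · exact absurd (ha.2 p h2 hap'.le) hap'.ne'
        · have hfp : f a < f p := (hf hap'.le).lt_of_ne (fun h => by
            have : g (f a) < r := ha.1
            rw [← h] at h2; exact this.ne h2)
          exact hqscov.2.2.2 (f p) h2.le hfp hp
      obtain ⟨b, hbmax, hbcov⟩ := (hf' qs).1 a haA
      have hfb : f b = qs := fval_eq haA hbcov.2.2.1 hbmax.1
      refine ⟨b, ⟨?_, ?_⟩, ?_, ?_, hbcov.2.2.1, ?_⟩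
      · show g (f b) ≤ r
        rw [hfb, hgqs]
      · intro p hp hbp
        have h1 : qs ≤ f p := hfb ▸ hf hbp
        have h2 : f p = qs := hqsmax.2 (f p) hp h1
        exact hbmax.2 p h2.le hbp
      · exact le_of_lt (ha.1 : g (f a) < r)
      · show g (f b) ≤ r
        rw [hfb, hgqs]
      · intro x hx hax hxb
        exact hbcov.2.2.2 x (le_trans (hf hxb.le) hfb.le) hax hxb
    · -- purity
      intro a ha b hbcov
      have hq : IsMaxIn (g ⁻¹' {y | y < r}) (f a) := key a ha
      have hab : a < b := hbcov.2.2.1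
      have hfab : f a < f b := (hf hab.le).lt_of_ne (fun h => by
        have hbA : b ∈ (g ∘ f) ⁻¹' {y | y < r} := by
          show g (f b) < r; rw [← h]; exact ha.1
        exact absurd (ha.2 b hbA hab.le) hab.ne')
      obtain ⟨q', hq'1, hq'2, hq'3, hq'min⟩ :=
        exists_cover_le (T := g ⁻¹' {y | y ≤ r})
          (fun x y hxy hy => le_trans (hg hxy) hy) hbcov.2.1 hfab
      have hcovq' : CoversIn (g ⁻¹' {y | y ≤ r}) (f a) q' :=
        ⟨le_of_lt (ha.1 : g (f a) < r), hq'3, hq'1, hq'min⟩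
      have hq'max : IsMaxIn (g ⁻¹' {y | y ≤ r}) q' := (hg' r).2 (f a) hq q' hcovq'
      have hfbq' : f b = q' := hq'max.2 (f b) hbcov.2.1 hq'2
      have hgq' : g q' = r := by
        rcases lt_or_eq_of_le (hq'3 : g q' ≤ r) with h | h
        · exact absurd (hq.2 q' h hq'1.le) hq'1.ne'
        · exact h
      have haA' : IsMaxIn (f ⁻¹' {y | y < q'}) a := by
        refine ⟨hq'1, fun p hp hap => ?_⟩
        by_contra hne
        have hap' : a < p := hap.lt_of_ne (fun h => hne h.symm)
        have h1 : g (f p) ≤ r := hgq' ▸ hg (le_of_lt hp)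
        rcases lt_or_eq_of_le h1 with h2 | h2
        · exact absurd (ha.2 p h2 hap'.le) hap'.ne'
        · have hfp : f a < f p := (hf hap'.le).lt_of_ne (fun h => by
            have : g (f a) < r := ha.1
            rw [← h] at h2; exact this.ne h2)
          exact hq'min (f p) h2.le hfp hp
      have hbcovB' : CoversIn (f ⁻¹' {y | y ≤ q'}) a b := by
        refine ⟨hq'1.le, hfbq'.le, hab, fun x _ hax hxb => hbcov.2.2.2 x ?_ hax hxb⟩
        show g (f x) ≤ r
        exact le_trans (hg (le_trans (hf hxb.le) hfbq'.le)) hgq'.le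
      have hbmaxB' : IsMaxIn (f ⁻¹' {y | y ≤ q'}) b := (hf' q').2 a haA' b hbcovB'
      refine ⟨hbcov.2.1, fun p hp hbp => ?_⟩
      have h1 : q' ≤ f p := hfbq' ▸ hf hbp
      have h2 : f p = q' := hq'max.2 (f p) hp h1
      exact hbmaxB'.2 p h2.le hbp
  · -- descent
    intro hf' hgf' hsurj r
    have hTclosed : ∀ ⦃x y : Q⦄, x ≤ y → y ∈ g ⁻¹' {y | y ≤ r} → x ∈ g ⁻¹' {y | y ≤ r} :=
      fun x y hxy hy => le_trans (hg hxy) hy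
    have lift : ∀ q : Q, IsMaxIn (g ⁻¹' {y | y < r}) q →
        ∃ a, IsMaxIn ((g ∘ f) ⁻¹' {y | y < r}) a ∧ f a = q := by
      intro q hq
      obtain ⟨a0, ha0⟩ := hsurj q
      have ha0A : a0 ∈ (g ∘ f) ⁻¹' {y | y < r} := by
        show g (f a0) < r; rw [ha0]; exact hq.1
      obtain ⟨a, ha0a, ha⟩ := exists_maxIn_above ha0A
      have hfa : f a = q := hq.2 (f a) ha.1 (ha0 ▸ hf ha0a)
      exact ⟨a, ha, hfa⟩
    have gpure : ∀ q : Q, IsMaxIn (g ⁻¹' {y | y < r}) q →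
        ∀ q', CoversIn (g ⁻¹' {y | y ≤ r}) q q' → IsMaxIn (g ⁻¹' {y | y ≤ r}) q' := by
      intro q hq q' hq'cov
      have hqq' : q < q' := hq'cov.2.2.1
      have hgq' : g q' = r := by
        rcases lt_or_eq_of_le (hq'cov.2.1 : g q' ≤ r) with h | h
        · exact absurd (hq.2 q' h hqq'.le) hqq'.ne'
        · exact h
      obtain ⟨a, ha, hfa⟩ := lift q hq
      have haA' : IsMaxIn (f ⁻¹' {y | y < q'}) a := by
        refine ⟨by show f a < q'; rw [hfa]; exact hqq', fun p hp hap => ?_⟩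
        by_contra hne
        have hap' : a < p := hap.lt_of_ne (fun h => hne h.symm)
        have h1 : g (f p) ≤ r := hgq' ▸ hg (le_of_lt hp)
        rcases lt_or_eq_of_le h1 with h2 | h2
        · exact absurd (ha.2 p h2 hap'.le) hap'.ne'
        · have hfp : q < f p := (hfa ▸ hf hap'.le).lt_of_ne (fun h => by
            have : g q < r := hq.1
            rw [← h] at h2; exact this.ne h2)
          exact hq'cov.2.2.2 (f p) h2.le hfp hp
      obtain ⟨c, hcmaxB', hccov⟩ := (hf' q').1 a haA'
      have hfc : f c = q' := fval_eq haA' hccov.2.2.1 hcmaxB'.1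
      have hccovB : CoversIn ((g ∘ f) ⁻¹' {y | y ≤ r}) a c :=
        ⟨le_of_lt (ha.1 : g (f a) < r),
         by show g (f c) ≤ r; rw [hfc, hgq'],
         hccov.2.2.1,
         fun x hx hax hxc => hccov.2.2.2 x (le_trans (hf hxc.le) hfc.le) hax hxc⟩
      have hcmaxB : IsMaxIn ((g ∘ f) ⁻¹' {y | y ≤ r}) c := (hgf' r).2 a ha c hccovB
      have := maxIn_image hf (fun q => (hf' q).1) hTclosed
        (S := g ⁻¹' {y | y ≤ r}) (a := c) hcmaxB
      rwa [hfc] at this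
    refine ⟨?_, gpure⟩
    intro q hq
    obtain ⟨a, ha, hfa⟩ := lift q hq
    obtain ⟨b, hbmaxB, hbcovB⟩ := (hgf' r).1 a ha
    have hfbmaxT : IsMaxIn (g ⁻¹' {y | y ≤ r}) (f b) :=
      maxIn_image hf (fun q => (hf' q).1) hTclosed hbmaxB
    have hab : a < b := hbcovB.2.2.1
    have hqfb : q < f b := (hfa ▸ hf hab.le).lt_of_ne (fun h => by
      have hbA : b ∈ (g ∘ f) ⁻¹' {y | y < r} := by
        show g (f b) < r; rw [← h]; exact hq.1
      exact absurd (ha.2 b hbA hab.le) hab.ne')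
    refine ⟨f b, hfbmaxT, le_of_lt (hq.1 : g q < r), hfbmaxT.1, hqfb, ?_⟩
    intro z hz hqz hzfb
    obtain ⟨q', hq'1, hq'2, hq'3, hq'min⟩ := exists_cover_le hTclosed hz hqz
    have hcov : CoversIn (g ⁻¹' {y | y ≤ r}) q q' :=
      ⟨le_of_lt (hq.1 : g q < r), hq'3, hq'1, hq'min⟩
    have hq'max : IsMaxIn (g ⁻¹' {y | y ≤ r}) q' := gpure q hq q' hcov
    have hfbq' : f b = q' := hq'max.2 (f b) hfbmaxT.1 (hq'2.trans hzfb.le)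
    exact lt_irrefl z (lt_of_lt_of_le (hfbq' ▸ hzfb) hq'2)
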